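/- Every continuous piecewise linear function g : ℝ → ℝ with compact support lies in 𝒳 = Span{ReLU(a·x + b) : a ≠ 0, b ∈ ℝ}. -/

import Mathlib

noncomputable def ReLU (t : ℝ) : ℝ := max t 0

noncomputable def Xspan : Submodule ℝ (ℝ → ℝ) :=
  Submodule.span ℝ {f | ∃ a b : ℝ, a ≠ 0 ∧ f = fun x => ReLU (a * x + b)}

theorem piecewise_linear_mem_X (g : ℝ → ℝ) (hg : Continuous g) (n : ℕ)
    (p : Fin (n + 1) → ℝ) (hp : StrictMono p)
    (hzero : ∀ x : ℝ, x ∉ Set.Icc (p 0) (p (Fin.last n)) → g x = 0)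
    (haffine : ∀ i : Fin n, ∃ a b : ℝ,
      ∀ x ∈ Set.Icc (p i.castSucc) (p i.succ), g x = a * x + b) :
    g ∈ Xspan := by
  classical
  choose a b hab using haffine
  set A : ℕ → ℝ := fun k => if h : k < n then a ⟨k, h⟩ else 0 with hA
  set C : ℕ → ℝ := fun j => A j - (if j = 0 then 0 else A (j - 1)) with hC
  have hsum : ∀ k : ℕ, ∑ j ∈ Finset.range (k + 1), C j = A k := by
    intro k
    induction k with
    | zero => simp [hC]
    | succ m ih =>
      rw [Finset.sum_range_succ, ih]
      simp [hC]
  set F : ℝ → ℝ := fun x => ∑ j : Fin (n + 1), C j.val * ReLU (x - p j) with hF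
  -- F is in the span
  have hFmem : F ∈ Xspan := by
    have : F = ∑ j : Fin (n + 1), C j.val • (fun x => ReLU (1 * x + (- p j))) := by
      funext x
      simp [hF, Finset.sum_apply, sub_eq_add_neg]
    rw [this]
    apply Submodule.sum_mem
    intro j _
    apply Submodule.smul_mem
    apply Submodule.subset_span
    exact ⟨1, -p j, one_ne_zero, rfl⟩
  -- g vanishes at the endpoints (by continuity)
  have hgp0 : g (p 0) = 0 := by
    have h1 : Filter.Tendsto g (nhdsWithin (p 0) (Set.Iio (p 0))) (nhds (g (p 0))) :=
      (hg.tendsto (p 0)).mono_left nhdsWithin_le_nhds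
    have h2 : Filter.Tendsto g (nhdsWithin (p 0) (Set.Iio (p 0))) (nhds 0) := by
      refine Filter.Tendsto.congr' ?_ tendsto_const_nhds
      filter_upwards [self_mem_nhdsWithin] with x hx
      have hx' : x < p 0 := hx
      exact (hzero x (fun h => absurd h.1 (not_le.2 hx'))).symm
    exact tendsto_nhds_unique h1 h2
  have hglast : g (p (Fin.last n)) = 0 := by
    have h1 : Filter.Tendsto g (nhdsWithin (p (Fin.last n)) (Set.Ioi (p (Fin.last n))))
        (nhds (g (p (Fin.last n)))) :=
      (hg.tendsto _).mono_left nhdsWithin_le_nhds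
    have h2 : Filter.Tendsto g (nhdsWithin (p (Fin.last n)) (Set.Ioi (p (Fin.last n))))
        (nhds 0) := by
      refine Filter.Tendsto.congr' ?_ tendsto_const_nhds
      filter_upwards [self_mem_nhdsWithin] with x hx
      have hx' : p (Fin.last n) < x := hx
      exact (hzero x (fun h => absurd h.2 (not_le.2 hx'))).symm
    exact tendsto_nhds_unique h1 h2
  -- F vanishes left of p 0
  have hFle : ∀ x : ℝ, x ≤ p 0 → F x = 0 := by
    intro x hx
    rw [hF]
    apply Finset.sum_eq_zero
    intro j _
    have hpj : p 0 ≤ p j := hp.monotone (Fin.zero_le j)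
    have : ReLU (x - p j) = 0 := max_eq_right (by linarith)
    rw [this, mul_zero]
  -- difference formula for F on a slab
  have hFdiff : ∀ (k : ℕ) (q x : ℝ), q ≤ x →
      (∀ j : Fin (n + 1), j.val ≤ k → p j ≤ q) →
      (∀ j : Fin (n + 1), k < j.val → x ≤ p j) →
      k < n + 1 →
      F x - F q = A k * (x - q) := by
    intro k q x hqx hle hgt hk
    rw [hF]
    simp only []
    rw [← Finset.sum_sub_distrib]
    have hterm : ∀ j : Fin (n + 1),
        C j.val * ReLU (x - p j) - C j.val * ReLU (q - p j)
          = if j.val ≤ k then C j.val * (x - q) else 0 := by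
      intro j
      by_cases hj : j.val ≤ k
      · have h1 : p j ≤ q := hle j hj
        have r1 : ReLU (x - p j) = x - p j := max_eq_left (by linarith)
        have r2 : ReLU (q - p j) = q - p j := max_eq_left (by linarith)
        rw [r1, r2, if_pos hj]
        ring
      · have h1 : x ≤ p j := hgt j (not_le.1 hj)
        have r1 : ReLU (x - p j) = 0 := max_eq_right (by linarith)
        have r2 : ReLU (q - p j) = 0 := max_eq_right (by linarith)
        rw [r1, r2, if_neg hj]
        ring
    rw [Finset.sum_congr rfl (fun j _ => hterm j)]
    have e1 : ∑ j : Fin (n + 1), (if j.val ≤ k then C j.val * (x - q) else 0)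
        = ∑ j ∈ Finset.range (n + 1), (if j ≤ k then C j * (x - q) else 0) :=
      Fin.sum_univ_eq_sum_range (fun j => if j ≤ k then C j * (x - q) else 0) (n + 1)
    rw [e1]
    rw [← Finset.sum_subset (Finset.range_subset_range.2 (Nat.succ_le_of_lt hk))
      (fun j _ hj => by
        rw [if_neg]
        intro hjk
        exact hj (Finset.mem_range.2 (Nat.lt_succ_of_le hjk)))]
    rw [Finset.sum_congr rfl (fun j hj => if_pos (Nat.lt_succ_iff.1 (Finset.mem_range.1 hj)))]
    rw [← Finset.sum_mul, hsum k]
  -- key: g and F agree on [p 0, p k]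
  have key : ∀ k : Fin (n + 1), ∀ x ∈ Set.Icc (p 0) (p k), g x = F x := by
    intro k
    induction k using Fin.induction with
    | zero =>
      intro x hx
      have : x = p 0 := le_antisymm hx.2 hx.1
      rw [this, hgp0, hFle (p 0) le_rfl]
    | succ i ih =>
      intro x hx
      by_cases hcase : x ≤ p i.castSucc
      · exact ih x ⟨hx.1, hcase⟩
      · push_neg at hcase
        set q := p i.castSucc with hq
        have hqx : q ≤ x := le_of_lt hcase
        have hxs : x ≤ p i.succ := hx.2
        have hAi : A i.val = a i := by
          rw [hA]
          simp [i.isLt]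
        have hdiff : F x - F q = A i.val * (x - q) := by
          apply hFdiff i.val q x hqx
          · intro j hj
            exact hp.monotone (by rw [Fin.le_def]; exact hj)
          · intro j hj
            exact le_trans hxs (hp.monotone (by rw [Fin.le_def]; simpa using hj))
          · omega
        have hgq : g q = a i * q + b i :=
          hab i q ⟨le_rfl, le_of_lt (hp (Fin.castSucc_lt_succ (i := i)))⟩
        have hgx : g x = a i * x + b i := hab i x ⟨hqx, hxs⟩
        have hFq : g q = F q := ih q ⟨hp.monotone (Fin.zero_le _), le_rfl⟩
        calc g x = g q + a i * (x - q) := by rw [hgq, hgx]; ring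
        _ = F q + A i.val * (x - q) := by rw [hFq, hAi]
        _ = F x := by rw [← hdiff]; ring
  -- conclude
  have hgF : g = F := by
    funext x
    rcases lt_trichotomy x (p 0) with hx | hx | hx
    · rw [hzero x (fun h => absurd h.1 (not_le.2 hx)), hFle x (le_of_lt hx)]
    · exact key 0 x ⟨le_of_eq hx.symm, le_of_eq hx⟩
    · by_cases hxl : x ≤ p (Fin.last n)
      · exact key (Fin.last n) x ⟨le_of_lt hx, hxl⟩
      · push_neg at hxl
        have h0 : g x = 0 := hzero x (fun h => absurd h.2 (not_le.2 hxl))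
        have hFlast : F (p (Fin.last n)) = 0 := by
          rw [← key (Fin.last n) (p (Fin.last n)) ⟨hp.monotone (Fin.zero_le _), le_rfl⟩]
          exact hglast
        have hdiff : F x - F (p (Fin.last n)) = A n * (x - p (Fin.last n)) := by
          apply hFdiff n (p (Fin.last n)) x (le_of_lt hxl)
          · intro j _
            exact hp.monotone (Fin.le_last j)
          · intro j hj
            exact absurd j.isLt (by omega)
          · omega
        have hAn : A n = 0 := by rw [hA]; simp
        rw [h0]
        have := hdiff
        rw [hAn, zero_mul] at this
        linarith [hFlast, this]
  rw [hgF]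
  exact hFmem
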